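/- Let m ≥ 3. The graph on vertex set Z_m × Z_8 formed by the union of Cay(Z_m × Z_8, {±1} × {2}) and m vertex-disjoint copies of the two 1-factors I_1 = {(0,1),(2,3),(4,5),(6,7)} and I_3 = {(0,4),(1,5),(2,6),(3,7)} (one copy of each placed on {j} × Z_8 for each j ∈ Z_m) can be decomposed into two C_8-factors. -/

import Mathlib

open SimpleGraph

/-- `H` is a `C_k`-factor: a 2-regular spanning graph all of whose
connected components have exactly `k` vertices (hence are `k`-cycles). -/
def IsCycleFactor {V : Type*} (H : SimpleGraph V) (k : ℕ) : Prop :=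
  (∀ v, (H.neighborSet v).ncard = 2) ∧
  (∀ v, (H.connectedComponentMk v).supp.ncard = k)

/-- `H` is a perfect matching (1-factor): every vertex has exactly one neighbour. -/
def IsOneFactor {V : Type*} (H : SimpleGraph V) : Prop :=
  ∀ v, (H.neighborSet v).ncard = 1

/-- A partition of the edge set of `G` into cycle factors with prescribed cycle lengths. -/
def CycleDecomp {V : Type*} {k : ℕ} (G : SimpleGraph V) (ℓ : Fin k → ℕ) : Prop :=
  ∃ f : Fin k → SimpleGraph V,
    (∀ i, f i ≤ G ∧ IsCycleFactor (f i) (ℓ i)) ∧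
    ∀ e ∈ G.edgeSet, ∃! i, e ∈ (f i).edgeSet

/-- A partition of the edge set of `G` into cycle factors with prescribed cycle
lengths together with one perfect matching. -/
def CycleDecompPM {V : Type*} {k : ℕ} (G : SimpleGraph V) (ℓ : Fin k → ℕ) : Prop :=
  ∃ (f : Fin k → SimpleGraph V) (M : SimpleGraph V),
    (∀ i, f i ≤ G ∧ IsCycleFactor (f i) (ℓ i)) ∧ M ≤ G ∧ IsOneFactor M ∧
    ∀ e ∈ G.edgeSet,
      ((∃! i, e ∈ (f i).edgeSet) ∧ e ∉ M.edgeSet) ∨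
      ((∀ i, e ∉ (f i).edgeSet) ∧ e ∈ M.edgeSet)

/-- The Cayley graph on `ZMod m × ZMod n` with connection set `S`
(symmetrised, loops removed). -/
def cay (m n : ℕ) (S : Set (ZMod m × ZMod n)) : SimpleGraph (ZMod m × ZMod n) :=
  SimpleGraph.fromRel (fun x y => x - y ∈ S)

/-- The 1-factors `I_1` and `I_3` of `K_8`, as a set of pairs. -/
def I13 : Set (ZMod 8 × ZMod 8) :=
  {(0, 1), (2, 3), (4, 5), (6, 7), (0, 4), (1, 5), (2, 6), (3, 7)}



/- ### auxiliary definitions for the construction -/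

/-- vertices whose forward Cayley edge belongs to factor 1 -/
abbrev zc1 (b : ZMod 8) : Prop := b = 0 ∨ b = 1 ∨ b = 4 ∨ b = 5
/-- vertices whose forward Cayley edge belongs to factor 2 -/
abbrev zc2 (b : ZMod 8) : Prop := b = 2 ∨ b = 3 ∨ b = 6 ∨ b = 7

/-- matching partner function for factor 1: pairs (0,1),(4,5),(2,6),(3,7) -/
def zp1 (b : ZMod 8) : ZMod 8 :=
  if b = 0 then 1 else if b = 1 then 0 else if b = 2 then 6 else if b = 3 then 7
  else if b = 4 then 5 else if b = 5 then 4 else if b = 6 then 2 else 3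

/-- matching partner function for factor 2: pairs (2,3),(6,7),(0,4),(1,5) -/
def zp2 (b : ZMod 8) : ZMod 8 :=
  if b = 0 then 4 else if b = 1 then 5 else if b = 2 then 3 else if b = 3 then 2
  else if b = 4 then 0 else if b = 5 then 1 else if b = 6 then 7 else 6

abbrev zm1 (b d : ZMod 8) : Prop :=
  (b=0∧d=1)∨(b=1∧d=0)∨(b=4∧d=5)∨(b=5∧d=4)∨(b=2∧d=6)∨(b=6∧d=2)∨(b=3∧d=7)∨(b=7∧d=3)
abbrev zm2 (b d : ZMod 8) : Prop :=
  (b=2∧d=3)∨(b=3∧d=2)∨(b=6∧d=7)∨(b=7∧d=6)∨(b=0∧d=4)∨(b=4∧d=0)∨(b=1∧d=5)∨(b=5∧d=1)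

def Fac1 (m : ℕ) : SimpleGraph (ZMod m × ZMod 8) where
  Adj x y := (x.1 = y.1 ∧ zm1 x.2 y.2) ∨ (y.1 = x.1 + 1 ∧ y.2 = x.2 + 2 ∧ zc1 x.2) ∨
    (x.1 = y.1 + 1 ∧ x.2 = y.2 + 2 ∧ zc1 y.2)
  symm := by
    constructor
    rintro x y (⟨h1, h2⟩ | ⟨h1, h2, h3⟩ | ⟨h1, h2, h3⟩)
    · exact Or.inl ⟨h1.symm, (by decide : ∀ b d : ZMod 8, zm1 b d → zm1 d b) _ _ h2⟩
    · exact Or.inr (Or.inr ⟨h1, h2, h3⟩)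
    · exact Or.inr (Or.inl ⟨h1, h2, h3⟩)
  loopless := by
    constructor
    rintro x (⟨_, h⟩ | ⟨_, h, _⟩ | ⟨_, h, _⟩)
    · exact (by decide : ∀ b : ZMod 8, ¬ zm1 b b) x.2 h
    all_goals exact (by decide : ∀ b : ZMod 8, ¬ b = b + 2) x.2 h

def Fac2 (m : ℕ) : SimpleGraph (ZMod m × ZMod 8) where
  Adj x y := (x.1 = y.1 ∧ zm2 x.2 y.2) ∨ (y.1 = x.1 + 1 ∧ y.2 = x.2 + 2 ∧ zc2 x.2) ∨
    (x.1 = y.1 + 1 ∧ x.2 = y.2 + 2 ∧ zc2 y.2)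
  symm := by
    constructor
    rintro x y (⟨h1, h2⟩ | ⟨h1, h2, h3⟩ | ⟨h1, h2, h3⟩)
    · exact Or.inl ⟨h1.symm, (by decide : ∀ b d : ZMod 8, zm2 b d → zm2 d b) _ _ h2⟩
    · exact Or.inr (Or.inr ⟨h1, h2, h3⟩)
    · exact Or.inr (Or.inl ⟨h1, h2, h3⟩)
  loopless := by
    constructor
    rintro x (⟨_, h⟩ | ⟨_, h, _⟩ | ⟨_, h, _⟩)
    · exact (by decide : ∀ b : ZMod 8, ¬ zm2 b b) x.2 h
    all_goals exact (by decide : ∀ b : ZMod 8, ¬ b = b + 2) x.2 h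

section Fac1
variable {m : ℕ}

lemma fac1_adj_iff (j : ZMod m) (b : ZMod 8) (c : ZMod m) (d : ZMod 8) :
    (Fac1 m).Adj (j, b) (c, d) ↔
      (j = c ∧ zm1 b d) ∨ (c = j + 1 ∧ d = b + 2 ∧ zc1 b) ∨ (j = c + 1 ∧ b = d + 2 ∧ zc1 d) :=
  Iff.rfl

lemma nbhd1_cay (j : ZMod m) (b : ZMod 8) (hb : zc1 b) :
    (Fac1 m).neighborSet (j, b) = {(j, zp1 b), (j + 1, b + 2)} := by
  ext ⟨c, d⟩
  simp only [mem_neighborSet, fac1_adj_iff, Set.mem_insert_iff, Set.mem_singleton_iff,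
    Prod.mk.injEq]
  constructor
  · rintro (⟨h1, h2⟩ | ⟨h1, h2, -⟩ | ⟨-, h2, h3⟩)
    · exact Or.inl ⟨h1.symm, ((by decide : ∀ b d : ZMod 8, zm1 b d → d = zp1 b) _ _ h2)⟩
    · exact Or.inr ⟨h1, h2⟩
    · exact absurd hb (h2 ▸ ((by decide : ∀ d : ZMod 8, zc1 d → ¬ zc1 (d + 2)) _ h3))
  · rintro (⟨h1, h2⟩ | ⟨h1, h2⟩)
    · exact Or.inl ⟨h1.symm, by subst h2; revert hb; revert b; decide⟩
    · exact Or.inr (Or.inl ⟨h1, h2, hb⟩)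

lemma nbhd1_ncay (j : ZMod m) (b : ZMod 8) (hb : ¬ zc1 b) :
    (Fac1 m).neighborSet (j, b) = {(j, zp1 b), (j - 1, b - 2)} := by
  ext ⟨c, d⟩
  simp only [mem_neighborSet, fac1_adj_iff, Set.mem_insert_iff, Set.mem_singleton_iff,
    Prod.mk.injEq]
  constructor
  · rintro (⟨h1, h2⟩ | ⟨-, -, h3⟩ | ⟨h1, h2, h3⟩)
    · exact Or.inl ⟨h1.symm, ((by decide : ∀ b d : ZMod 8, zm1 b d → d = zp1 b) _ _ h2)⟩
    · exact absurd h3 hb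
    · refine Or.inr ⟨by rw [h1]; ring, by rw [h2]; ring⟩
  · rintro (⟨h1, h2⟩ | ⟨h1, h2⟩)
    · exact Or.inl ⟨h1.symm, by subst h2; revert hb; revert b; decide⟩
    · subst h1; subst h2
      exact Or.inr (Or.inr ⟨by ring, by ring,
        (by decide : ∀ b : ZMod 8, ¬ zc1 b → zc1 (b - 2)) b hb⟩)

lemma deg1 (v : ZMod m × ZMod 8) : ((Fac1 m).neighborSet v).ncard = 2 := by
  obtain ⟨j, b⟩ := v
  by_cases hb : zc1 b
  · rw [nbhd1_cay j b hb]
    refine Set.ncard_pair fun h => ?_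
    exact (by decide : ∀ b : ZMod 8, zc1 b → ¬ zp1 b = b + 2) b hb (congrArg Prod.snd h)
  · rw [nbhd1_ncay j b hb]
    refine Set.ncard_pair fun h => ?_
    exact (by decide : ∀ b : ZMod 8, ¬ zc1 b → ¬ zp1 b = b - 2) b hb (congrArg Prod.snd h)

/-- parametrisation of the 8-cycle of `Fac1` attached to column `J` -/
def g1 (J : ZMod m) (b : ZMod 8) : ZMod m × ZMod 8 :=
  (if zc1 b then J else J + 1, b)

lemma g1_closed (J : ZMod m) (b : ZMod 8) (y : ZMod m × ZMod 8)
    (h : (Fac1 m).Adj (g1 J b) y) : y ∈ Set.range (g1 J) := by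
  by_cases hb : zc1 b
  · rw [show g1 J b = (J, b) by unfold g1; rw [if_pos hb], ← mem_neighborSet,
      nbhd1_cay J b hb] at h
    simp only [Set.mem_insert_iff, Set.mem_singleton_iff] at h
    rcases h with rfl | rfl
    · refine ⟨zp1 b, ?_⟩
      unfold g1
      rw [if_pos ((by decide : ∀ b : ZMod 8, zc1 b → zc1 (zp1 b)) b hb)]
    · refine ⟨b + 2, ?_⟩
      unfold g1
      rw [if_neg ((by decide : ∀ b : ZMod 8, zc1 b → ¬ zc1 (b + 2)) b hb)]
  · rw [show g1 J b = (J + 1, b) by unfold g1; rw [if_neg hb], ← mem_neighborSet,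
      nbhd1_ncay _ b hb] at h
    simp only [Set.mem_insert_iff, Set.mem_singleton_iff] at h
    rcases h with rfl | rfl
    · refine ⟨zp1 b, ?_⟩
      unfold g1
      rw [if_neg ((by decide : ∀ b : ZMod 8, ¬ zc1 b → ¬ zc1 (zp1 b)) b hb)]
    · refine ⟨b - 2, ?_⟩
      unfold g1
      rw [if_pos ((by decide : ∀ b : ZMod 8, ¬ zc1 b → zc1 (b - 2)) b hb)]
      exact Prod.ext (by ring) rfl

lemma g1_reach (J : ZMod m) (b : ZMod 8) : (Fac1 m).Reachable (g1 J b) (g1 J 0) := by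
  have e0 : g1 J 0 = (J, 0) := by unfold g1; rw [if_pos (by decide : zc1 (0 : ZMod 8))]
  have e1 : g1 J 1 = (J, 1) := by unfold g1; rw [if_pos (by decide : zc1 (1 : ZMod 8))]
  have e4 : g1 J 4 = (J, 4) := by unfold g1; rw [if_pos (by decide : zc1 (4 : ZMod 8))]
  have e5 : g1 J 5 = (J, 5) := by unfold g1; rw [if_pos (by decide : zc1 (5 : ZMod 8))]
  have e2 : g1 J 2 = (J + 1, 2) := by unfold g1; rw [if_neg (by decide : ¬ zc1 (2 : ZMod 8))]
  have e3 : g1 J 3 = (J + 1, 3) := by unfold g1; rw [if_neg (by decide : ¬ zc1 (3 : ZMod 8))]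
  have e6 : g1 J 6 = (J + 1, 6) := by unfold g1; rw [if_neg (by decide : ¬ zc1 (6 : ZMod 8))]
  have e7 : g1 J 7 = (J + 1, 7) := by unfold g1; rw [if_neg (by decide : ¬ zc1 (7 : ZMod 8))]
  have a01 : (Fac1 m).Adj (J, 0) (J, 1) := Or.inl ⟨rfl, (by decide : zm1 0 1)⟩
  have a13 : (Fac1 m).Adj (J, 1) (J + 1, 3) :=
    Or.inr (Or.inl ⟨rfl, (by decide : (3 : ZMod 8) = 1 + 2), (by decide : zc1 1)⟩)
  have a37 : (Fac1 m).Adj (J + 1, 3) (J + 1, 7) := Or.inl ⟨rfl, (by decide : zm1 3 7)⟩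
  have a75 : (Fac1 m).Adj (J + 1, 7) (J, 5) :=
    Or.inr (Or.inr ⟨rfl, (by decide : (7 : ZMod 8) = 5 + 2), (by decide : zc1 5)⟩)
  have a54 : (Fac1 m).Adj (J, 5) (J, 4) := Or.inl ⟨rfl, (by decide : zm1 5 4)⟩
  have a46 : (Fac1 m).Adj (J, 4) (J + 1, 6) :=
    Or.inr (Or.inl ⟨rfl, (by decide : (6 : ZMod 8) = 4 + 2), (by decide : zc1 4)⟩)
  have a62 : (Fac1 m).Adj (J + 1, 6) (J + 1, 2) := Or.inl ⟨rfl, (by decide : zm1 6 2)⟩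
  have r1 : (Fac1 m).Reachable (J, 1) (J, 0) := a01.symm.reachable
  have r3 : (Fac1 m).Reachable (J + 1, 3) (J, 0) := (a13.symm.reachable).trans r1
  have r7 : (Fac1 m).Reachable (J + 1, 7) (J, 0) := (a37.symm.reachable).trans r3
  have r5 : (Fac1 m).Reachable (J, 5) (J, 0) := (a75.symm.reachable).trans r7
  have r4 : (Fac1 m).Reachable (J, 4) (J, 0) := (a54.symm.reachable).trans r5
  have r6 : (Fac1 m).Reachable (J + 1, 6) (J, 0) := (a46.symm.reachable).trans r4
  have r2 : (Fac1 m).Reachable (J + 1, 2) (J, 0) := (a62.symm.reachable).trans r6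
  have hcase : ∀ b : ZMod 8, b = 0 ∨ b = 1 ∨ b = 2 ∨ b = 3 ∨ b = 4 ∨ b = 5 ∨ b = 6 ∨ b = 7 := by
    decide
  rw [e0]
  rcases hcase b with rfl | rfl | rfl | rfl | rfl | rfl | rfl | rfl
  · rw [e0]
  · rw [e1]; exact r1
  · rw [e2]; exact r2
  · rw [e3]; exact r3
  · rw [e4]; exact r4
  · rw [e5]; exact r5
  · rw [e6]; exact r6
  · rw [e7]; exact r7

end Fac1
section Supp
variable {m : ℕ}

lemma walk_mem_closed {V : Type*} {G : SimpleGraph V} {s : Set V}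
    (hs : ∀ x ∈ s, ∀ y, G.Adj x y → y ∈ s) :
    ∀ {a b : V}, G.Walk a b → a ∈ s → b ∈ s := by
  intro a b p
  induction p with
  | nil => exact id
  | cons h q ih => exact fun ha => ih (hs _ ha _ h)

lemma g1_inj (J : ZMod m) : Function.Injective (g1 J) :=
  fun a b h => congrArg Prod.snd h

lemma range_ncard {α β : Type*} [Fintype α] {f : α → β} (hf : Function.Injective f) :
    (Set.range f).ncard = Fintype.card α := by
  rw [← Nat.card_coe_set_eq, Nat.card_range_of_injective hf, Nat.card_eq_fintype_card]

lemma supp1 (J : ZMod m) (b : ZMod 8) :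
    ((Fac1 m).connectedComponentMk (g1 J b)).supp = Set.range (g1 J) := by
  ext u
  rw [ConnectedComponent.mem_supp_iff]
  constructor
  · intro h
    obtain ⟨p⟩ := (ConnectedComponent.exact h).symm
    exact walk_mem_closed (fun x hx y hy => by
      obtain ⟨c, rfl⟩ := hx; exact g1_closed J c y hy) p ⟨b, rfl⟩
  · rintro ⟨c, rfl⟩
    exact ConnectedComponent.sound ((g1_reach J c).trans (g1_reach J b).symm)

lemma comp1_card (v : ZMod m × ZMod 8) :
    ((Fac1 m).connectedComponentMk v).supp.ncard = 8 := by
  obtain ⟨j, b⟩ := v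
  by_cases hb : zc1 b
  · have hv : (j, b) = g1 j b := by unfold g1; rw [if_pos hb]
    rw [hv, supp1, range_ncard (g1_inj j)]
    decide
  · have hv : (j, b) = g1 (j - 1) b := by
      unfold g1; rw [if_neg hb]
      exact Prod.ext (by ring) rfl
    rw [hv, supp1, range_ncard (g1_inj (j - 1))]
    decide

end Supp
section Fac2
variable {m : ℕ}

lemma fac2_adj_iff (j : ZMod m) (b : ZMod 8) (c : ZMod m) (d : ZMod 8) :
    (Fac2 m).Adj (j, b) (c, d) ↔
      (j = c ∧ zm2 b d) ∨ (c = j + 1 ∧ d = b + 2 ∧ zc2 b) ∨ (j = c + 1 ∧ b = d + 2 ∧ zc2 d) :=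
  Iff.rfl

lemma nbhd2_cay (j : ZMod m) (b : ZMod 8) (hb : zc2 b) :
    (Fac2 m).neighborSet (j, b) = {(j, zp2 b), (j + 1, b + 2)} := by
  ext ⟨c, d⟩
  simp only [mem_neighborSet, fac2_adj_iff, Set.mem_insert_iff, Set.mem_singleton_iff,
    Prod.mk.injEq]
  constructor
  · rintro (⟨h1, h2⟩ | ⟨h1, h2, -⟩ | ⟨-, h2, h3⟩)
    · exact Or.inl ⟨h1.symm, ((by decide : ∀ b d : ZMod 8, zm2 b d → d = zp2 b) _ _ h2)⟩
    · exact Or.inr ⟨h1, h2⟩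
    · exact absurd hb (h2 ▸ ((by decide : ∀ d : ZMod 8, zc2 d → ¬ zc2 (d + 2)) _ h3))
  · rintro (⟨h1, h2⟩ | ⟨h1, h2⟩)
    · exact Or.inl ⟨h1.symm, by subst h2; revert hb; revert b; decide⟩
    · exact Or.inr (Or.inl ⟨h1, h2, hb⟩)

lemma nbhd2_ncay (j : ZMod m) (b : ZMod 8) (hb : ¬ zc2 b) :
    (Fac2 m).neighborSet (j, b) = {(j, zp2 b), (j - 1, b - 2)} := by
  ext ⟨c, d⟩
  simp only [mem_neighborSet, fac2_adj_iff, Set.mem_insert_iff, Set.mem_singleton_iff,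
    Prod.mk.injEq]
  constructor
  · rintro (⟨h1, h2⟩ | ⟨-, -, h3⟩ | ⟨h1, h2, h3⟩)
    · exact Or.inl ⟨h1.symm, ((by decide : ∀ b d : ZMod 8, zm2 b d → d = zp2 b) _ _ h2)⟩
    · exact absurd h3 hb
    · refine Or.inr ⟨by rw [h1]; ring, by rw [h2]; ring⟩
  · rintro (⟨h1, h2⟩ | ⟨h1, h2⟩)
    · exact Or.inl ⟨h1.symm, by subst h2; revert hb; revert b; decide⟩
    · subst h1; subst h2
      exact Or.inr (Or.inr ⟨by ring, by ring,
        (by decide : ∀ b : ZMod 8, ¬ zc2 b → zc2 (b - 2)) b hb⟩)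

lemma deg2 (v : ZMod m × ZMod 8) : ((Fac2 m).neighborSet v).ncard = 2 := by
  obtain ⟨j, b⟩ := v
  by_cases hb : zc2 b
  · rw [nbhd2_cay j b hb]
    refine Set.ncard_pair fun h => ?_
    exact (by decide : ∀ b : ZMod 8, zc2 b → ¬ zp2 b = b + 2) b hb (congrArg Prod.snd h)
  · rw [nbhd2_ncay j b hb]
    refine Set.ncard_pair fun h => ?_
    exact (by decide : ∀ b : ZMod 8, ¬ zc2 b → ¬ zp2 b = b - 2) b hb (congrArg Prod.snd h)

/-- parametrisation of the 8-cycle of `Fac2` attached to column `J` -/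
def g2 (J : ZMod m) (b : ZMod 8) : ZMod m × ZMod 8 :=
  (if zc2 b then J else J + 1, b)

lemma g2_closed (J : ZMod m) (b : ZMod 8) (y : ZMod m × ZMod 8)
    (h : (Fac2 m).Adj (g2 J b) y) : y ∈ Set.range (g2 J) := by
  by_cases hb : zc2 b
  · rw [show g2 J b = (J, b) by unfold g2; rw [if_pos hb], ← mem_neighborSet,
      nbhd2_cay J b hb] at h
    simp only [Set.mem_insert_iff, Set.mem_singleton_iff] at h
    rcases h with rfl | rfl
    · refine ⟨zp2 b, ?_⟩
      unfold g2
      rw [if_pos ((by decide : ∀ b : ZMod 8, zc2 b → zc2 (zp2 b)) b hb)]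
    · refine ⟨b + 2, ?_⟩
      unfold g2
      rw [if_neg ((by decide : ∀ b : ZMod 8, zc2 b → ¬ zc2 (b + 2)) b hb)]
  · rw [show g2 J b = (J + 1, b) by unfold g2; rw [if_neg hb], ← mem_neighborSet,
      nbhd2_ncay _ b hb] at h
    simp only [Set.mem_insert_iff, Set.mem_singleton_iff] at h
    rcases h with rfl | rfl
    · refine ⟨zp2 b, ?_⟩
      unfold g2
      rw [if_neg ((by decide : ∀ b : ZMod 8, ¬ zc2 b → ¬ zc2 (zp2 b)) b hb)]
    · refine ⟨b - 2, ?_⟩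
      unfold g2
      rw [if_pos ((by decide : ∀ b : ZMod 8, ¬ zc2 b → zc2 (b - 2)) b hb)]
      exact Prod.ext (by ring) rfl

lemma g2_reach (J : ZMod m) (b : ZMod 8) : (Fac2 m).Reachable (g2 J b) (g2 J 2) := by
  have e2 : g2 J 2 = (J, 2) := by unfold g2; rw [if_pos (by decide : zc2 (2 : ZMod 8))]
  have e3 : g2 J 3 = (J, 3) := by unfold g2; rw [if_pos (by decide : zc2 (3 : ZMod 8))]
  have e6 : g2 J 6 = (J, 6) := by unfold g2; rw [if_pos (by decide : zc2 (6 : ZMod 8))]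
  have e7 : g2 J 7 = (J, 7) := by unfold g2; rw [if_pos (by decide : zc2 (7 : ZMod 8))]
  have e0 : g2 J 0 = (J + 1, 0) := by unfold g2; rw [if_neg (by decide : ¬ zc2 (0 : ZMod 8))]
  have e1 : g2 J 1 = (J + 1, 1) := by unfold g2; rw [if_neg (by decide : ¬ zc2 (1 : ZMod 8))]
  have e4 : g2 J 4 = (J + 1, 4) := by unfold g2; rw [if_neg (by decide : ¬ zc2 (4 : ZMod 8))]
  have e5 : g2 J 5 = (J + 1, 5) := by unfold g2; rw [if_neg (by decide : ¬ zc2 (5 : ZMod 8))]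
  have a23 : (Fac2 m).Adj (J, 2) (J, 3) := Or.inl ⟨rfl, (by decide : zm2 2 3)⟩
  have a35 : (Fac2 m).Adj (J, 3) (J + 1, 5) :=
    Or.inr (Or.inl ⟨rfl, (by decide : (5 : ZMod 8) = 3 + 2), (by decide : zc2 3)⟩)
  have a51 : (Fac2 m).Adj (J + 1, 5) (J + 1, 1) := Or.inl ⟨rfl, (by decide : zm2 5 1)⟩
  have a17 : (Fac2 m).Adj (J + 1, 1) (J, 7) :=
    Or.inr (Or.inr ⟨rfl, (by decide : (1 : ZMod 8) = 7 + 2), (by decide : zc2 7)⟩)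
  have a76 : (Fac2 m).Adj (J, 7) (J, 6) := Or.inl ⟨rfl, (by decide : zm2 7 6)⟩
  have a60 : (Fac2 m).Adj (J, 6) (J + 1, 0) :=
    Or.inr (Or.inl ⟨rfl, (by decide : (0 : ZMod 8) = 6 + 2), (by decide : zc2 6)⟩)
  have a04 : (Fac2 m).Adj (J + 1, 0) (J + 1, 4) := Or.inl ⟨rfl, (by decide : zm2 0 4)⟩
  have r3 : (Fac2 m).Reachable (J, 3) (J, 2) := a23.symm.reachable
  have r5 : (Fac2 m).Reachable (J + 1, 5) (J, 2) := (a35.symm.reachable).trans r3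
  have r1 : (Fac2 m).Reachable (J + 1, 1) (J, 2) := (a51.symm.reachable).trans r5
  have r7 : (Fac2 m).Reachable (J, 7) (J, 2) := (a17.symm.reachable).trans r1
  have r6 : (Fac2 m).Reachable (J, 6) (J, 2) := (a76.symm.reachable).trans r7
  have r0 : (Fac2 m).Reachable (J + 1, 0) (J, 2) := (a60.symm.reachable).trans r6
  have r4 : (Fac2 m).Reachable (J + 1, 4) (J, 2) := (a04.symm.reachable).trans r0
  have hcase : ∀ b : ZMod 8, b = 0 ∨ b = 1 ∨ b = 2 ∨ b = 3 ∨ b = 4 ∨ b = 5 ∨ b = 6 ∨ b = 7 := by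
    decide
  rw [e2]
  rcases hcase b with rfl | rfl | rfl | rfl | rfl | rfl | rfl | rfl
  · rw [e0]; exact r0
  · rw [e1]; exact r1
  · rw [e2]
  · rw [e3]; exact r3
  · rw [e4]; exact r4
  · rw [e5]; exact r5
  · rw [e6]; exact r6
  · rw [e7]; exact r7

end Fac2
section Supp2
variable {m : ℕ}

lemma g2_inj (J : ZMod m) : Function.Injective (g2 J) :=
  fun a b h => congrArg Prod.snd h

lemma supp2 (J : ZMod m) (b : ZMod 8) :
    ((Fac2 m).connectedComponentMk (g2 J b)).supp = Set.range (g2 J) := by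
  ext u
  rw [ConnectedComponent.mem_supp_iff]
  constructor
  · intro h
    obtain ⟨p⟩ := (ConnectedComponent.exact h).symm
    exact walk_mem_closed (fun x hx y hy => by
      obtain ⟨c, rfl⟩ := hx; exact g2_closed J c y hy) p ⟨b, rfl⟩
  · rintro ⟨c, rfl⟩
    exact ConnectedComponent.sound ((g2_reach J c).trans (g2_reach J b).symm)

lemma comp2_card (v : ZMod m × ZMod 8) :
    ((Fac2 m).connectedComponentMk v).supp.ncard = 8 := by
  obtain ⟨j, b⟩ := v
  by_cases hb : zc2 b
  · have hv : (j, b) = g2 j b := by unfold g2; rw [if_pos hb]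
    rw [hv, supp2, range_ncard (g2_inj j)]
    decide
  · have hv : (j, b) = g2 (j - 1) b := by
      unfold g2; rw [if_neg hb]
      exact Prod.ext (by ring) rfl
    rw [hv, supp2, range_ncard (g2_inj (j - 1))]
    decide

end Supp2
section Assemble
variable {m : ℕ}

abbrev Gm (m : ℕ) : SimpleGraph (ZMod m × ZMod 8) :=
  SimpleGraph.fromRel (fun x y : ZMod m × ZMod 8 =>
    x - y = ((1 : ZMod m), (2 : ZMod 8)) ∨ (x.1 = y.1 ∧ (x.2, y.2) ∈ I13))

lemma mem_I13_iff (p : ZMod 8 × ZMod 8) :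
    p ∈ I13 ↔ p = (0,1) ∨ p = (2,3) ∨ p = (4,5) ∨ p = (6,7) ∨ p = (0,4) ∨ p = (1,5) ∨
      p = (2,6) ∨ p = (3,7) := by
  simp [I13]

lemma zm1_mem (b d : ZMod 8) (h : zm1 b d) : (b, d) ∈ I13 ∨ (d, b) ∈ I13 := by
  rw [mem_I13_iff, mem_I13_iff]
  revert h; revert b d
  decide

lemma zm2_mem (b d : ZMod 8) (h : zm2 b d) : (b, d) ∈ I13 ∨ (d, b) ∈ I13 := by
  rw [mem_I13_iff, mem_I13_iff]
  revert h; revert b d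
  decide

lemma fac1_le : Fac1 m ≤ Gm m := by
  rintro ⟨x1, x2⟩ ⟨y1, y2⟩ h
  simp only [Gm, SimpleGraph.fromRel_adj]
  constructor
  · intro heq
    exact (Fac1 m).loopless.irrefl _ (heq ▸ h)
  · rcases h with ⟨h1, h2⟩ | ⟨h1, h2, -⟩ | ⟨h1, h2, -⟩
    · rcases zm1_mem x2 y2 h2 with hm | hm
      · exact Or.inl (Or.inr ⟨h1, hm⟩)
      · exact Or.inr (Or.inr ⟨h1.symm, hm⟩)
    · refine Or.inr (Or.inl ?_)
      have h1' : y1 = x1 + 1 := h1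
      have h2' : y2 = x2 + 2 := h2
      rw [Prod.mk_sub_mk, Prod.mk.injEq, h1', h2']
      exact ⟨by ring, by ring⟩
    · refine Or.inl (Or.inl ?_)
      have h1' : x1 = y1 + 1 := h1
      have h2' : x2 = y2 + 2 := h2
      rw [Prod.mk_sub_mk, Prod.mk.injEq, h1', h2']
      exact ⟨by ring, by ring⟩

lemma fac2_le : Fac2 m ≤ Gm m := by
  rintro ⟨x1, x2⟩ ⟨y1, y2⟩ h
  simp only [Gm, SimpleGraph.fromRel_adj]
  constructor
  · intro heq
    exact (Fac2 m).loopless.irrefl _ (heq ▸ h)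
  · rcases h with ⟨h1, h2⟩ | ⟨h1, h2, -⟩ | ⟨h1, h2, -⟩
    · rcases zm2_mem x2 y2 h2 with hm | hm
      · exact Or.inl (Or.inr ⟨h1, hm⟩)
      · exact Or.inr (Or.inr ⟨h1.symm, hm⟩)
    · refine Or.inr (Or.inl ?_)
      have h1' : y1 = x1 + 1 := h1
      have h2' : y2 = x2 + 2 := h2
      rw [Prod.mk_sub_mk, Prod.mk.injEq, h1', h2']
      exact ⟨by ring, by ring⟩
    · refine Or.inl (Or.inl ?_)
      have h1' : x1 = y1 + 1 := h1
      have h2' : x2 = y2 + 2 := h2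
      rw [Prod.mk_sub_mk, Prod.mk.injEq, h1', h2']
      exact ⟨by ring, by ring⟩

set_option synthInstance.maxSize 2000 in
set_option maxHeartbeats 1000000 in
lemma snd_disj : ∀ b d : ZMod 8,
    ¬ ((zm1 b d ∨ (d = b + 2 ∧ zc1 b) ∨ (b = d + 2 ∧ zc1 d)) ∧
      (zm2 b d ∨ (d = b + 2 ∧ zc2 b) ∨ (b = d + 2 ∧ zc2 d))) := by
  decide

lemma fac_disjoint (x y : ZMod m × ZMod 8) (h1 : (Fac1 m).Adj x y) (h2 : (Fac2 m).Adj x y) :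
    False := by
  refine snd_disj x.2 y.2 ⟨?_, ?_⟩
  · rcases h1 with ⟨-, h⟩ | ⟨-, ha, hb⟩ | ⟨-, ha, hb⟩
    · exact Or.inl h
    · exact Or.inr (Or.inl ⟨ha, hb⟩)
    · exact Or.inr (Or.inr ⟨ha, hb⟩)
  · rcases h2 with ⟨-, h⟩ | ⟨-, ha, hb⟩ | ⟨-, ha, hb⟩
    · exact Or.inl h
    · exact Or.inr (Or.inl ⟨ha, hb⟩)
    · exact Or.inr (Or.inr ⟨ha, hb⟩)

lemma zm_cover (b d : ZMod 8)
    (h : (b,d) = ((0:ZMod 8),(1:ZMod 8)) ∨ (b,d) = (2,3) ∨ (b,d) = (4,5) ∨ (b,d) = (6,7) ∨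
      (b,d) = (0,4) ∨ (b,d) = (1,5) ∨ (b,d) = (2,6) ∨ (b,d) = (3,7)) :
    zm1 b d ∨ zm2 b d := by
  revert h; revert b d; decide

lemma fac_cover (x y : ZMod m × ZMod 8) (h : (Gm m).Adj x y) :
    (Fac1 m).Adj x y ∨ (Fac2 m).Adj x y := by
  obtain ⟨x1, x2⟩ := x
  obtain ⟨y1, y2⟩ := y
  simp only [Gm, SimpleGraph.fromRel_adj] at h
  have hcc : ∀ b : ZMod 8, zc1 b ∨ zc2 b := by decide
  rcases h.2 with (hc | ⟨he, hm⟩) | (hc | ⟨he, hm⟩)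
  · rw [Prod.mk_sub_mk, Prod.mk.injEq] at hc
    have h1 : x1 = y1 + 1 := by rw [← hc.1]; ring
    have h2 : x2 = y2 + 2 := by rw [← hc.2]; ring
    rcases hcc y2 with hz | hz
    · exact Or.inl (Or.inr (Or.inr ⟨h1, h2, hz⟩))
    · exact Or.inr (Or.inr (Or.inr ⟨h1, h2, hz⟩))
  · rw [mem_I13_iff] at hm
    rcases zm_cover x2 y2 hm with hz | hz
    · exact Or.inl (Or.inl ⟨he, hz⟩)
    · exact Or.inr (Or.inl ⟨he, hz⟩)
  · rw [Prod.mk_sub_mk, Prod.mk.injEq] at hc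
    have h1 : y1 = x1 + 1 := by rw [← hc.1]; ring
    have h2 : y2 = x2 + 2 := by rw [← hc.2]; ring
    rcases hcc x2 with hz | hz
    · exact Or.inl (Or.inr (Or.inl ⟨h1, h2, hz⟩))
    · exact Or.inr (Or.inr (Or.inl ⟨h1, h2, hz⟩))
  · rw [mem_I13_iff] at hm
    rcases zm_cover y2 x2 hm with hz | hz
    · exact Or.inl (Or.inl ⟨he.symm,
        (by decide : ∀ b d : ZMod 8, zm1 b d → zm1 d b) _ _ hz⟩)
    · exact Or.inr (Or.inl ⟨he.symm,
        (by decide : ∀ b d : ZMod 8, zm2 b d → zm2 d b) _ _ hz⟩)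

end Assemble

theorem stmt_7 (m : ℕ) (hm : 3 ≤ m) :
    CycleDecomp
      (SimpleGraph.fromRel (fun x y : ZMod m × ZMod 8 =>
        x - y = ((1 : ZMod m), (2 : ZMod 8)) ∨ (x.1 = y.1 ∧ (x.2, y.2) ∈ I13)))
      (fun _ : Fin 2 => 8) := by
  refine ⟨![Fac1 m, Fac2 m], fun i => ?_, fun e he => ?_⟩
  · fin_cases i
    · exact ⟨fac1_le, deg1, comp1_card⟩
    · exact ⟨fac2_le, deg2, comp2_card⟩
  · induction e using Sym2.ind with
    | _ x y =>
      rw [(SimpleGraph.fromRel _).mem_edgeSet] at he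
      rcases fac_cover x y he with h | h
      · refine ⟨0, ((Fac1 m).mem_edgeSet).2 h, fun i hi => ?_⟩
        fin_cases i
        · rfl
        · exact (fac_disjoint x y h (((Fac2 m).mem_edgeSet).1 hi)).elim
      · refine ⟨1, ((Fac2 m).mem_edgeSet).2 h, fun i hi => ?_⟩
        fin_cases i
        · exact (fac_disjoint x y (((Fac1 m).mem_edgeSet).1 hi) h).elim
        · rfl
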